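/- For n ∈ ℤ[ω] with n ≡ 1 (mod 3), the sum Σ_{d | n, d ∈ ℤ, d ≡ 1 (mod 3)} μ(|d|) equals 1 if n has no rational prime divisor, and 0 otherwise. -/

import Mathlib

/-- The ring of Eisenstein integers `ℤ[ω]`, represented as pairs `a + b·ω`. -/
@[ext]
structure Eisenstein where
  a : ℤ
  b : ℤ

namespace Eisenstein

instance : Zero Eisenstein := ⟨⟨0, 0⟩⟩
instance : One Eisenstein := ⟨⟨1, 0⟩⟩
instance : Add Eisenstein := ⟨fun x y => ⟨x.a + y.a, x.b + y.b⟩⟩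
instance : Neg Eisenstein := ⟨fun x => ⟨-x.a, -x.b⟩⟩
instance : Mul Eisenstein :=
  ⟨fun x y => ⟨x.a * y.a - x.b * y.b, x.a * y.b + x.b * y.a - x.b * y.b⟩⟩

@[simp] lemma zero_a : (0 : Eisenstein).a = 0 := rfl
@[simp] lemma zero_b : (0 : Eisenstein).b = 0 := rfl
@[simp] lemma one_a : (1 : Eisenstein).a = 1 := rfl
@[simp] lemma one_b : (1 : Eisenstein).b = 0 := rfl
@[simp] lemma add_a (x y : Eisenstein) : (x + y).a = x.a + y.a := rfl
@[simp] lemma add_b (x y : Eisenstein) : (x + y).b = x.b + y.b := rfl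
@[simp] lemma neg_a (x : Eisenstein) : (-x).a = -x.a := rfl
@[simp] lemma neg_b (x : Eisenstein) : (-x).b = -x.b := rfl
@[simp] lemma mul_a (x y : Eisenstein) : (x * y).a = x.a * y.a - x.b * y.b := rfl
@[simp] lemma mul_b (x y : Eisenstein) : (x * y).b = x.a * y.b + x.b * y.a - x.b * y.b := rfl

instance : CommRing Eisenstein where
  add_assoc x y z := by ext <;> simp <;> ring
  zero_add x := by ext <;> simp
  add_zero x := by ext <;> simp
  add_comm x y := by ext <;> simp <;> ring
  neg_add_cancel x := by ext <;> simp
  mul_assoc x y z := by ext <;> simp <;> ring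
  one_mul x := by ext <;> simp
  mul_one x := by ext <;> simp
  left_distrib x y z := by ext <;> simp <;> ring
  right_distrib x y z := by ext <;> simp <;> ring
  mul_comm x y := by ext <;> simp <;> ring
  zero_mul x := by ext <;> simp
  mul_zero x := by ext <;> simp
  nsmul := nsmulRec
  zsmul := zsmulRec

/-- The primitive cube root of unity `ω` in `ℤ[ω]`. -/
def ω : Eisenstein := ⟨0, 1⟩

/-- Complex conjugation on `ℤ[ω]`. -/
def conj (x : Eisenstein) : Eisenstein := ⟨x.a - x.b, -x.b⟩

/-- The norm `N(a + bω) = a² − ab + b²`. -/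
def norm (x : Eisenstein) : ℤ := x.a ^ 2 - x.a * x.b + x.b ^ 2

/-- The embedding of `ℤ[ω]` into `ℂ`, with `ω ↦ e^{2πi/3}`. -/
noncomputable def toC (x : Eisenstein) : ℂ :=
  (x.a : ℂ) + (x.b : ℂ) * Complex.exp (2 * Real.pi * Complex.I / 3)

/-- `R` is a complete system of residues modulo `n` in `ℤ[ω]`. -/
def IsResidueSystem (n : Eisenstein) (R : Finset Eisenstein) : Prop :=
  ∀ x : Eisenstein, ∃! d, d ∈ R ∧ n ∣ x - d

/-- `ě(z) = exp(2πi(z + z̄))`. -/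
noncomputable def eE (z : ℂ) : ℂ :=
  Complex.exp (2 * Real.pi * Complex.I * (z + (starRingEnd ℂ) z))

/-- `χ` is the cubic residue symbol `(m/n)₃` on `ℤ[ω]` (with values `0, 1, ω, ω²` in `ℤ[ω]`):
it is completely multiplicative in both arguments and is determined at prime moduli `π ∤ 3` by
`(m/π)₃ ≡ m^{(N(π)−1)/3} (mod π)`, `(m/π)₃ ∈ {1, ω, ω²}` for `π ∤ m`, and `(m/π)₃ = 0` for
`π ∣ m`. -/
def IsCubicResidueSymbol (χ : Eisenstein → Eisenstein → Eisenstein) : Prop :=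
  (∀ m₁ m₂ n, χ (m₁ * m₂) n = χ m₁ n * χ m₂ n) ∧
  (∀ m n₁ n₂, χ m (n₁ * n₂) = χ m n₁ * χ m n₂) ∧
  (∀ m π : Eisenstein, Prime π → ¬ π ∣ 3 → π ∣ m → χ m π = 0) ∧
  (∀ m π : Eisenstein, Prime π → ¬ π ∣ 3 → ¬ π ∣ m →
    χ m π ∈ ({1, ω, ω ^ 2} : Set Eisenstein) ∧
      π ∣ m ^ ((norm π - 1) / 3).toNat - χ m π)

/-- The generalized cubic Gauss sum `g(r,n) = Σ_{x mod n} (x/n)₃ ě(rx/n)`, computed with respect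
to a complete residue system `R` modulo `n`. -/
noncomputable def gSum (χ : Eisenstein → Eisenstein → Eisenstein) (r n : Eisenstein)
    (R : Finset Eisenstein) : ℂ :=
  ∑ x ∈ R, toC (χ x n) * eE (toC r * toC x / toC n)

end Eisenstein


namespace Eisenstein

lemma intCast_def (k : ℤ) : (k : Eisenstein) = ⟨k, 0⟩ := by
  induction k using Int.induction_on with
  | zero => rfl
  | succ i ih => push_cast [ih]; ext <;> simp
  | pred i ih => push_cast [ih]; ext <;> simp [sub_eq_add_neg]

lemma norm_mul' (x y : Eisenstein) : norm (x * y) = norm x * norm y := by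
  simp only [norm, mul_a, mul_b]; ring

lemma norm_intCast (k : ℤ) : norm (k : Eisenstein) = k ^ 2 := by
  rw [intCast_def]; simp only [norm]; ring

lemma norm_nonneg' (x : Eisenstein) : 0 ≤ norm x := by
  have := sq_nonneg (x.a - x.b); have := sq_nonneg x.a; have := sq_nonneg x.b
  simp only [norm]; nlinarith

lemma norm_pos_of_ne_zero {x : Eisenstein} (hx : x ≠ 0) : 0 < norm x := by
  rcases lt_or_eq_of_le (norm_nonneg' x) with h | h
  · exact h
  · exfalso; apply hx
    have h2 : x.a ^ 2 - x.a * x.b + x.b ^ 2 = 0 := by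
      have := h.symm; simpa [norm] using this
    have ha : x.a = 0 := by nlinarith [sq_nonneg (x.a - x.b), sq_nonneg x.a, sq_nonneg x.b]
    have hb : x.b = 0 := by nlinarith [sq_nonneg (x.a - x.b), sq_nonneg x.a, sq_nonneg x.b]
    ext <;> simp [ha, hb]

lemma int_cancel {k : ℤ} (hk : k ≠ 0) {x y : Eisenstein}
    (h : (k : Eisenstein) * x = (k : Eisenstein) * y) : x = y := by
  rw [intCast_def] at h
  have ha := congrArg Eisenstein.a h
  have hb := congrArg Eisenstein.b h
  simp only [mul_a, mul_b] at ha hb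
  ext
  · exact mul_left_cancel₀ hk (by linarith)
  · exact mul_left_cancel₀ hk (by linarith)

end Eisenstein

open Eisenstein in
open scoped ArithmeticFunction ArithmeticFunction.Moebius in
/-- For `n ≡ 1 (mod 3)` in `ℤ[ω]`, the sum `Σ_{d ∣ n, d ∈ ℤ, d ≡ 1 (mod 3)} μ(|d|)` equals 1
if `n` has no rational prime divisor, and 0 otherwise. -/
theorem statement_15 (n : Eisenstein) (hn : (3 : Eisenstein) ∣ n - 1) :
    haveI := Classical.dec
    (∑ d ∈ (Finset.Icc (-(norm n)) (norm n)).filter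
        (fun d : ℤ => d % 3 = 1 ∧ (d : Eisenstein) ∣ n), μ d.natAbs)
      = if (∀ p : ℕ, p.Prime → ¬ ((p : Eisenstein) ∣ n)) then 1 else 0 := by
  classical
  have h3E : (3 : Eisenstein) = ⟨3, 0⟩ := by
    rw [show (3 : Eisenstein) = ((3 : ℤ) : Eisenstein) from by norm_cast, intCast_def]
  have h31 : ¬ ((3 : Eisenstein) ∣ 1) := by
    rintro ⟨c, hc⟩
    rw [h3E] at hc
    have := congrArg Eisenstein.a hc
    simp only [mul_a, one_a] at this
    omega
  have hn0 : n ≠ 0 := by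
    rintro rfl
    obtain ⟨c, hc⟩ := hn
    exact h31 ⟨-c, by rw [mul_neg, ← hc]; ring⟩
  set B : ℤ := norm n with hB
  have hBpos : 0 < B := norm_pos_of_ne_zero hn0
  have hbound : ∀ m : ℕ, 0 < m → ((m : ℤ) : Eisenstein) ∣ n → (m : ℤ) ≤ B := by
    rintro m hm ⟨k, hk⟩
    have hk0 : k ≠ 0 := by rintro rfl; rw [mul_zero] at hk; exact hn0 hk
    have hnk := norm_pos_of_ne_zero hk0
    have h1 : B = (m : ℤ) ^ 2 * norm k := by
      rw [hB, hk, norm_mul', norm_intCast]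
    have hm' : (1 : ℤ) ≤ (m : ℤ) := by exact_mod_cast hm
    nlinarith
  have hdvd3 : ∀ m : ℕ, ((m : ℤ) : Eisenstein) ∣ n → ¬ (3 ∣ m) := by
    rintro m hm ⟨j, rfl⟩
    obtain ⟨k, hk⟩ := hm
    have h3n : (3 : Eisenstein) ∣ n := ⟨((j : ℤ) : Eisenstein) * k, by rw [hk]; push_cast; ring⟩
    have := dvd_sub h3n hn
    simp only [sub_sub_cancel] at this
    exact h31 this
  set S : Finset ℕ := (Finset.Icc 1 B.toNat).filter
      (fun m => ((m : ℤ) : Eisenstein) ∣ n) with hSdef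
  have hSmem : ∀ m : ℕ, m ∈ S ↔ (0 < m ∧ ((m : ℤ) : Eisenstein) ∣ n) := by
    intro m
    simp only [hSdef, Finset.mem_filter, Finset.mem_Icc]
    constructor
    · rintro ⟨⟨h1, _⟩, h2⟩; exact ⟨h1, h2⟩
    · rintro ⟨h1, h2⟩
      refine ⟨⟨h1, ?_⟩, h2⟩
      have := hbound m h1 h2
      omega
  -- binary lcm
  have hlcm2 : ∀ a b : ℕ, 0 < a → 0 < b → ((a : ℤ) : Eisenstein) ∣ n →
      ((b : ℤ) : Eisenstein) ∣ n → ((Nat.lcm a b : ℤ) : Eisenstein) ∣ n := by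
    rintro a b ha0 hb0 ⟨x, hx⟩ ⟨y, hy⟩
    push_cast at hx hy
    have hg : ((Nat.gcd a b : ℤ)) = (a : ℤ) * Nat.gcdA a b + (b : ℤ) * Nat.gcdB a b :=
      Nat.gcd_eq_gcd_ab a b
    set U : Eisenstein := ((Nat.gcdA a b : ℤ) : Eisenstein) with hU
    set V : Eisenstein := ((Nat.gcdB a b : ℤ) : Eisenstein) with hV
    have hgE := congrArg (fun t : ℤ => (t : Eisenstein)) hg
    push_cast at hgE
    have key : n * ((Nat.gcd a b : ℕ) : Eisenstein)
        = ((a : Eisenstein) * (b : Eisenstein)) * (U * y + V * x) := by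
      rw [hgE]
      linear_combination ((a : Eisenstein) * U) * hy + ((b : Eisenstein) * V) * hx
    have hgne : (Nat.gcd a b : ℤ) ≠ 0 := by
      have : Nat.gcd a b ≠ 0 := Nat.gcd_ne_zero_left (by omega)
      exact_mod_cast this
    have hgl : ((Nat.gcd a b : ℕ) : Eisenstein) * ((Nat.lcm a b : ℕ) : Eisenstein)
        = (a : Eisenstein) * (b : Eisenstein) := by
      exact_mod_cast congrArg (fun t : ℕ => (t : Eisenstein)) (Nat.gcd_mul_lcm a b)
    refine ⟨U * y + V * x, ?_⟩
    push_cast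
    apply int_cancel hgne
    push_cast
    calc ((Nat.gcd a b : ℕ) : Eisenstein) * n
        = n * ((Nat.gcd a b : ℕ) : Eisenstein) := by ring
      _ = ((a : Eisenstein) * (b : Eisenstein)) * (U * y + V * x) := key
      _ = ((Nat.gcd a b : ℕ) : Eisenstein)
          * (((Nat.lcm a b : ℕ) : Eisenstein) * (U * y + V * x)) := by rw [← hgl]; ring
  -- finset lcm
  have hlcmS : ∀ s : Finset ℕ, (∀ m ∈ s, 0 < m ∧ ((m : ℤ) : Eisenstein) ∣ n) →
      0 < s.lcm id ∧ (((s.lcm id : ℕ) : ℤ) : Eisenstein) ∣ n := by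
    intro s
    induction s using Finset.induction_on with
    | empty => intro _; refine ⟨by simp, ?_⟩; simp [Finset.lcm_empty]
    | insert _ _ hnotmem ih =>
      rename_i a s'
      intro hall
      obtain ⟨ha0, hadvd⟩ := hall a (Finset.mem_insert_self a s')
      obtain ⟨hl0, hldvd⟩ := ih (fun m hm => hall m (Finset.mem_insert_of_mem hm))
      rw [Finset.lcm_insert]
      constructor
      · simp only [lcm_eq_nat_lcm, id_eq]
        exact Nat.lcm_pos ha0 hl0
      · simpa [lcm_eq_nat_lcm] using hlcm2 a (s'.lcm id) ha0 hl0 hadvd hldvd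
  set M : ℕ := S.lcm id with hMdef
  obtain ⟨hM0, hMdvd⟩ := hlcmS S (fun m hm => (hSmem m).1 hm)
  have hMS : M ∈ S := (hSmem M).2 ⟨hM0, hMdvd⟩
  have hSeq : S = M.divisors := by
    ext m
    rw [Nat.mem_divisors, hSmem]
    constructor
    · rintro ⟨h1, h2⟩
      refine ⟨?_, by omega⟩
      have : m ∈ S := (hSmem m).2 ⟨h1, h2⟩
      exact Finset.dvd_lcm this
    · rintro ⟨h1, h2⟩
      have hm0 : 0 < m := Nat.pos_of_ne_zero (by rintro rfl; exact h2 (zero_dvd_iff.mp h1))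
      refine ⟨hm0, ?_⟩
      have hcast : ((m : ℤ) : Eisenstein) ∣ ((M : ℤ) : Eisenstein) :=
        map_dvd (Int.castRingHom Eisenstein) (Int.natCast_dvd_natCast.mpr h1)
      exact hcast.trans hMdvd
  -- the bijection
  have hsum : (∑ d ∈ (Finset.Icc (-(norm n)) (norm n)).filter
        (fun d : ℤ => d % 3 = 1 ∧ (d : Eisenstein) ∣ n), μ d.natAbs)
      = ∑ m ∈ S, μ m := by
    refine Finset.sum_nbij' (i := fun d : ℤ => d.natAbs)
      (j := fun m : ℕ => if m % 3 = 1 then (m : ℤ) else -(m : ℤ)) ?_ ?_ ?_ ?_ ?_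
    · intro d hd
      simp only [Finset.mem_filter, Finset.mem_Icc] at hd
      obtain ⟨⟨_, _⟩, hd3, hddvd⟩ := hd
      have hd0 : d ≠ 0 := by omega
      refine (hSmem d.natAbs).2 ⟨by omega, ?_⟩
      rcases Int.natAbs_eq d with h | h
      · rw [← h]; exact hddvd
      · have : ((d.natAbs : ℤ) : Eisenstein) = -(d : Eisenstein) := by
          rw [show (d.natAbs : ℤ) = -d by omega]; push_cast; ring
        rw [this]; exact (neg_dvd).2 hddvd
    · intro m hm
      obtain ⟨hm0, hmdvd⟩ := (hSmem m).1 hm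
      have h3m : ¬ (3 ∣ m) := hdvd3 m hmdvd
      have hmB : (m : ℤ) ≤ B := hbound m hm0 hmdvd
      simp only [Finset.mem_filter, Finset.mem_Icc]
      have hneg : ((-(m : ℤ) : ℤ) : Eisenstein) = -((m : ℤ) : Eisenstein) := by push_cast; ring
      split_ifs with h
      · exact ⟨⟨by omega, by omega⟩, by omega, hmdvd⟩
      · refine ⟨⟨by omega, by omega⟩, by omega, ?_⟩
        rw [hneg]; exact (neg_dvd).2 hmdvd
    · intro d hd
      simp only [Finset.mem_filter, Finset.mem_Icc] at hd
      obtain ⟨_, hd3, _⟩ := hd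
      split_ifs with h <;> omega
    · intro m hm
      obtain ⟨hm0, _⟩ := (hSmem m).1 hm
      split_ifs with h <;> omega
    · intro d _; rfl
  rw [show (Finset.Icc (-B) B) = Finset.Icc (-(norm n)) (norm n) from by rw [hB]]
  rw [Finset.filter_congr_decidable, Finset.filter_congr_decidable] at hsum ⊢
  refine hsum.trans ?_
  rw [hSeq]
  have : (∑ m ∈ M.divisors, μ m) = (μ * (ArithmeticFunction.zeta : ArithmeticFunction ℕ)) M := by
    rw [ArithmeticFunction.coe_mul_zeta_apply]
  rw [this, ArithmeticFunction.moebius_mul_coe_zeta, ArithmeticFunction.one_apply]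
  have hiff : M = 1 ↔ (∀ p : ℕ, p.Prime → ¬ ((p : Eisenstein) ∣ n)) := by
    constructor
    · intro hM1 p hp hpn
      have hpn' : ((p : ℤ) : Eisenstein) ∣ n := by push_cast; exact hpn
      have : p ∈ S := (hSmem p).2 ⟨hp.pos, hpn'⟩
      have := Finset.dvd_lcm (f := id) this
      rw [← hMdef] at this
      simp only [id] at this
      rw [hM1] at this
      exact hp.one_lt.ne' (Nat.eq_one_of_dvd_one this)
    · intro hall
      by_contra hM1
      obtain ⟨p, hp, hpM⟩ := Nat.exists_prime_and_dvd hM1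
      have : p ∈ S := by rw [hSeq]; exact Nat.mem_divisors.2 ⟨hpM, by omega⟩
      obtain ⟨_, hpd⟩ := (hSmem p).1 this
      exact hall p hp (by exact_mod_cast hpd)
  split_ifs with h1 h2 h2
  · rfl
  · exact absurd (hiff.1 h1) h2
  · exact absurd (hiff.2 h2) h1
  · rfl
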